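/- Let k be a field of characteristic p > 0, let R = k[X₁,…,X_m] be a polynomial ring, and let f₁,…,fₙ ∈ R be a regular sequence such that the quotient ring R/(f₁,…,fₙ) is an integral domain. Then the monomials f₁^{α₁}···fₙ^{αₙ} with 0 ≤ αᵢ < p are linearly independent over the subring of p-th powers: if elements x_α ∈ R indexed by α ∈ {0,…,p−1}ⁿ satisfy Σ_α f₁^{α₁}···fₙ^{αₙ}·x_α^p = 0, then x_α = 0 for all α. -/

import Mathlib

open MvPolynomial Ideal

namespace MLIaux

variable {R : Type*} [CommRing R]

lemma degree_eq_sum {n : ℕ} (v : Fin n →₀ ℕ) : v.degree = ∑ i, v i :=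
  Finset.sum_subset (Finset.subset_univ _) (fun i _ h => Finsupp.notMem_support_iff.mp h)

lemma prod_pow_mem {n : ℕ} (f : Fin n → R) (v : Fin n → ℕ) :
    ∏ i, f i ^ v i ∈ (span (Set.range f)) ^ (∑ i, v i) := by
  rw [← Finset.prod_pow_eq_pow_sum]
  exact Ideal.prod_mem_prod fun i _ => Ideal.pow_mem_pow (Ideal.subset_span (Set.mem_range_self i)) _

lemma aeval_mem_of_coeff_mem {n : ℕ} (f : Fin n → R) (J : Ideal R) {d : ℕ}
    {F : MvPolynomial (Fin n) R} (hF : F.IsHomogeneous d) (hc : ∀ v, coeff v F ∈ J) :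
    aeval f F ∈ J * (span (Set.range f)) ^ d := by
  rw [F.as_sum, map_sum]
  refine Submodule.sum_mem _ fun v hv => ?_
  have hdeg : v.degree = d := by
    by_contra h
    exact mem_support_iff.mp hv (hF.coeff_eq_zero h)
  rw [aeval_monomial, Finsupp.prod_fintype _ _ (fun i => pow_zero _)]
  have h2 : ∏ i, f i ^ v i ∈ (span (Set.range f)) ^ d := by
    rw [← hdeg, degree_eq_sum]; exact prod_pow_mem f v
  simpa using Ideal.mul_mem_mul (hc v) h2

lemma span_pow_eq {n : ℕ} (f : Fin n → R) (d : ℕ) :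
    (span (Set.range f)) ^ d =
      Submodule.map (aeval f : MvPolynomial (Fin n) R →ₐ[R] R).toLinearMap
        (homogeneousSubmodule (Fin n) R d) := by
  apply le_antisymm
  · induction d with
    | zero =>
      intro x _
      exact Submodule.mem_map.mpr ⟨C x, (mem_homogeneousSubmodule _ _).mpr (isHomogeneous_C _ _), by simp⟩
    | succ d ih =>
      rw [pow_succ]
      refine Ideal.mul_le.mpr fun a ha b hb => ?_
      obtain ⟨F, hF, hFa⟩ := ih ha
      obtain ⟨c, hc⟩ := (Submodule.mem_span_range_iff_exists_fun R).mp hb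
      refine ⟨F * ∑ i, C (c i) * X i, ?_, ?_⟩
      · rw [SetLike.mem_coe, mem_homogeneousSubmodule] at hF ⊢
        exact hF.mul (IsHomogeneous.sum _ _ _ fun i _ => by
          simpa using (isHomogeneous_C (Fin n) (c i)).mul (isHomogeneous_X R i))
      · simp only [AlgHom.toLinearMap_apply] at hFa ⊢
        rw [_root_.map_mul, hFa, _root_.map_sum]
        congr 1
        rw [← hc]
        refine Finset.sum_congr rfl fun i _ => ?_
        rw [_root_.map_mul, aeval_C, aeval_X, smul_eq_mul]
        simp
  · rintro x ⟨F, hF, rfl⟩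
    have := aeval_mem_of_coeff_mem f ⊤ ((mem_homogeneousSubmodule _ _).mp (SetLike.mem_coe.mp hF)) (fun v => trivial)
    simpa [Ideal.top_mul] using this

lemma exists_rep {n : ℕ} (f : Fin n → R) {d : ℕ} {x : R}
    (hx : x ∈ (span (Set.range f)) ^ d) :
    ∃ F : MvPolynomial (Fin n) R, F.IsHomogeneous d ∧ aeval f F = x := by
  rw [span_pow_eq] at hx
  obtain ⟨F, hF, hFx⟩ := hx
  exact ⟨F, (mem_homogeneousSubmodule _ _).mp hF, by simpa using hFx⟩

lemma aeval_mem_pow {n : ℕ} (f : Fin n → R) {d : ℕ} {F : MvPolynomial (Fin n) R}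
    (hF : F.IsHomogeneous d) : aeval f F ∈ (span (Set.range f)) ^ d := by
  have := aeval_mem_of_coeff_mem f ⊤ hF (fun v => trivial)
  simpa [Ideal.top_mul] using this



lemma smul_top_ideal (I : Ideal R) : (I • ⊤ : Submodule R R) = I := by
  apply le_antisymm
  · exact Submodule.smul_le.mpr fun r hr m _ => by
      simpa [smul_eq_mul] using I.mul_mem_right m hr
  · intro x hx
    simpa [smul_eq_mul] using Submodule.smul_mem_smul hx (Submodule.mem_top (x := (1:R)))

lemma ofList_ofFn {n : ℕ} (f : Fin n → R) :
    Ideal.ofList (List.ofFn f) = span (Set.range f) := by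
  have : {r : R | r ∈ List.ofFn f} = Set.range f := Set.ext fun r => by simp [List.mem_ofFn]
  rw [Ideal.ofList, this]

lemma step_extract {n : ℕ} (f : Fin (n+1) → R)
    (h : RingTheory.Sequence.IsWeaklyRegular R (List.ofFn f)) :
    RingTheory.Sequence.IsWeaklyRegular R (List.ofFn (fun i : Fin n => f i.castSucc)) ∧
      ∀ w : R, f (Fin.last n) * w ∈ span (Set.range (fun i : Fin n => f i.castSucc)) →
        w ∈ span (Set.range (fun i : Fin n => f i.castSucc)) := by
  rw [List.ofFn_succ', List.concat_eq_append,
    RingTheory.Sequence.isWeaklyRegular_append_iff] at h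
  obtain ⟨h1, h2⟩ := h
  refine ⟨h1, fun w hw => ?_⟩
  rw [RingTheory.Sequence.isWeaklyRegular_singleton_iff, ofList_ofFn] at h2
  set J := span (Set.range (fun i : Fin n => f i.castSucc)) with hJ
  have key : f (Fin.last n) • (Submodule.Quotient.mk w : R ⧸ (J • ⊤ : Submodule R R))
      = f (Fin.last n) • (0 : R ⧸ (J • ⊤ : Submodule R R)) := by
    rw [smul_zero, ← Submodule.Quotient.mk_smul, Submodule.Quotient.mk_eq_zero, smul_top_ideal]
    simpa [smul_eq_mul] using hw
  have := h2 key
  rwa [Submodule.Quotient.mk_eq_zero, smul_top_ideal] at this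

lemma pow_sup_le (I' K : Ideal R) (e : ℕ) :
    (I' ⊔ K) ^ (e + 1) ≤ I' ^ (e + 1) ⊔ K * (I' ⊔ K) ^ e := by
  induction e with
  | zero => simp
  | succ e ih =>
    calc (I' ⊔ K) ^ (e + 2) = (I' ⊔ K) ^ (e + 1) * (I' ⊔ K) := by rw [pow_succ]
    _ ≤ (I' ^ (e + 1) ⊔ K * (I' ⊔ K) ^ e) * (I' ⊔ K) := Ideal.mul_mono_left ih
    _ = I' ^ (e + 1) * I' ⊔ (I' ^ (e + 1) * K ⊔ K * (I' ⊔ K) ^ e * (I' ⊔ K)) := by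
        rw [Ideal.sup_mul, Ideal.mul_sup, sup_assoc]
    _ ≤ I' ^ (e + 2) ⊔ K * (I' ⊔ K) ^ (e + 1) := by
        apply sup_le_sup
        · rw [← pow_succ]
        · apply sup_le
          · rw [mul_comm]
            exact Ideal.mul_mono_right (Ideal.pow_right_mono le_sup_left _)
          · rw [mul_assoc, ← pow_succ]




lemma restrict_apply {n : ℕ} (v : Fin (n+1) →₀ ℕ) (i : Fin n) :
    (Finsupp.equivFunOnFinite.symm (fun j : Fin n => v j.castSucc)) i = v i.castSucc := by
  simp [Finsupp.equivFunOnFinite]; rfl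

lemma decompose {n d : ℕ} (F : MvPolynomial (Fin (n+1)) R) (hF : F.IsHomogeneous (d+1)) :
    ∃ (G : MvPolynomial (Fin n) R) (H : MvPolynomial (Fin (n+1)) R),
      G.IsHomogeneous (d+1) ∧ H.IsHomogeneous d ∧
      F = rename Fin.castSucc G + X (Fin.last n) * H := by
  classical
  have hdeg : ∀ v ∈ F.support, v.degree = d + 1 := fun v hv => by
    by_contra h
    exact mem_support_iff.mp hv (hF.coeff_eq_zero h)
  set P : (Fin (n+1) →₀ ℕ) → Prop := fun v => v (Fin.last n) = 0 with hP
  refine ⟨∑ v ∈ F.support.filter P,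
      monomial (Finsupp.equivFunOnFinite.symm (fun j : Fin n => v j.castSucc)) (coeff v F),
    ∑ v ∈ F.support.filter (fun v => ¬ P v),
      monomial (v - Finsupp.single (Fin.last n) 1) (coeff v F), ?_, ?_, ?_⟩
  · refine IsHomogeneous.sum _ _ _ fun v hv => ?_
    rw [Finset.mem_filter] at hv
    refine isHomogeneous_monomial _ ?_
    rw [degree_eq_sum]
    have h1 : v.degree = d + 1 := hdeg v hv.1
    rw [degree_eq_sum, Fin.sum_univ_castSucc] at h1
    have h2 : v (Fin.last n) = 0 := hv.2
    simp only [restrict_apply]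
    omega
  · refine IsHomogeneous.sum _ _ _ fun v hv => ?_
    rw [Finset.mem_filter] at hv
    refine isHomogeneous_monomial _ ?_
    rw [degree_eq_sum]
    have h1 : v.degree = d + 1 := hdeg v hv.1
    rw [degree_eq_sum, Fin.sum_univ_castSucc] at h1
    have h2 : v (Fin.last n) ≠ 0 := hv.2
    have h3 : ∀ i : Fin n, (v - Finsupp.single (Fin.last n) 1 : Fin (n+1) →₀ ℕ) i.castSucc = v i.castSucc := by
      intro i
      rw [Finsupp.tsub_apply, Finsupp.single_apply, if_neg (Fin.ne_last_of_lt (Fin.castSucc_lt_last i)).symm]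
      omega
    have h4 : (v - Finsupp.single (Fin.last n) 1 : Fin (n+1) →₀ ℕ) (Fin.last n) = v (Fin.last n) - 1 := by
      rw [Finsupp.tsub_apply, Finsupp.single_apply, if_pos rfl]
    rw [Fin.sum_univ_castSucc]
    simp only [h3, h4]
    omega
  · conv_lhs => rw [F.as_sum, ← Finset.sum_filter_add_sum_filter_not F.support P]
    congr 1
    · rw [map_sum]
      refine Finset.sum_congr rfl fun v hv => ?_
      rw [Finset.mem_filter] at hv
      rw [rename_monomial]
      have hmd : Finsupp.mapDomain Fin.castSucc
          (Finsupp.equivFunOnFinite.symm (fun j : Fin n => v j.castSucc)) = v := by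
        ext i
        refine Fin.lastCases ?_ ?_ i
        · rw [Finsupp.mapDomain_notin_range]
          · exact hv.2.symm
          · rintro ⟨j, hj⟩
            exact (Fin.ne_last_of_lt (Fin.castSucc_lt_last j)) hj
        · intro j
          rw [Finsupp.mapDomain_apply (Fin.castSucc_injective n), restrict_apply]
      rw [hmd]
    · rw [Finset.mul_sum]
      refine Finset.sum_congr rfl fun v hv => ?_
      rw [Finset.mem_filter] at hv
      symm
      have hle : Finsupp.single (Fin.last n) 1 ≤ v :=
        Finsupp.single_le_iff.mpr (Nat.one_le_iff_ne_zero.mpr hv.2)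
      calc X (Fin.last n) * monomial (v - Finsupp.single (Fin.last n) 1) (coeff v F)
          = monomial (Finsupp.single (Fin.last n) 1) 1 *
            monomial (v - Finsupp.single (Fin.last n) 1) (coeff v F) := by
            rw [← X_pow_eq_monomial, pow_one]
        _ = monomial v (coeff v F) := by
            rw [monomial_mul, one_mul, add_tsub_cancel_of_le hle]


theorem quasi_regular : ∀ {n : ℕ} (f : Fin n → R),
    RingTheory.Sequence.IsWeaklyRegular R (List.ofFn f) →
    ∀ (d : ℕ), ∀ F : MvPolynomial (Fin n) R, F.IsHomogeneous d →
      (aeval f) F ∈ (span (Set.range f)) ^ (d + 1) →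
      ∀ v, coeff v F ∈ span (Set.range f) := by
  intro n
  induction n with
  | zero =>
    intro f _ d F hF hmem v
    have hrange : Set.range f = ∅ := Set.range_eq_empty f
    rw [hrange, span_empty] at hmem ⊢
    have h0 : (⊥ : Ideal R) ^ (d + 1) = ⊥ := by
      rw [← Ideal.zero_eq_bot, zero_pow (Nat.succ_ne_zero d)]
    rw [h0, Submodule.mem_bot] at hmem
    obtain ⟨c, rfl⟩ := C_surjective (Fin 0) F
    rw [aeval_C] at hmem
    simp only [Algebra.algebraMap_self, RingHom.id_apply] at hmem
    rw [Submodule.mem_bot, hmem]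
    simp
  | succ n ih =>
    intro f hreg
    obtain ⟨hreg', hlast⟩ := step_extract f hreg
    set f' : Fin n → R := fun i : Fin n => f i.castSucc with hf'
    set g : R := f (Fin.last n) with hg
    set I' : Ideal R := span (Set.range f') with hI'
    set I : Ideal R := span (Set.range f) with hI
    have QR' := ih f' hreg'
    have hI'leI : I' ≤ I := span_mono (by rintro r ⟨i, rfl⟩; exact ⟨i.castSucc, rfl⟩)
    have hgI : g ∈ I := subset_span ⟨Fin.last n, rfl⟩
    have hIsup : I = I' ⊔ span {g} := by
      have hrange : Set.range f = Set.range f' ∪ {g} := by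
        ext r
        constructor
        · rintro ⟨i, rfl⟩
          refine Fin.lastCases ?_ ?_ i
          · exact Or.inr rfl
          · intro j; exact Or.inl ⟨j, rfl⟩
        · rintro (⟨j, rfl⟩ | h)
          · exact ⟨j.castSucc, rfl⟩
          · exact ⟨Fin.last n, h.symm⟩
      rw [hI, hrange, span_union]
    have lemB : ∀ (e : ℕ) (w : R), g * w ∈ I' ^ e → w ∈ I' ^ e := by
      intro e
      induction e with
      | zero => intro w _; rw [pow_zero, Ideal.one_eq_top]; exact Submodule.mem_top
      | succ e ihe =>
        intro w hw
        have hw' : w ∈ I' ^ e := ihe w (Ideal.pow_le_pow_right (Nat.le_succ e) hw)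
        obtain ⟨W, hWh, hWe⟩ := exists_rep f' hw'
        have hCW : (C g * W : MvPolynomial (Fin n) R).IsHomogeneous e := by
          simpa using (isHomogeneous_C (Fin n) g).mul hWh
        have hmem2 : aeval f' (C g * W) ∈ I' ^ (e + 1) := by
          rw [_root_.map_mul, aeval_C]
          simpa [hWe] using hw
        have hcoeffs := QR' e _ hCW hmem2
        have hWc : ∀ u, coeff u W ∈ I' := fun u =>
          hlast _ (by simpa [coeff_C_mul] using hcoeffs u)
        have := aeval_mem_of_coeff_mem f' I' hWh hWc
        rw [hWe] at this
        rwa [← pow_succ'] at this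
    intro d
    induction d with
    | zero =>
      intro F hF hmem v
      have hFC : F = C (coeff 0 F) := by
        ext u
        rw [coeff_C]
        split
        · next h => rw [h]
        · next h =>
          refine hF.coeff_eq_zero ?_
          rw [degree_eq_sum]
          intro hsum
          refine h ?_
          ext i
          simpa using (Finset.sum_eq_zero_iff.mp hsum i (Finset.mem_univ i)).symm
      by_cases hv : (0 : Fin (n+1) →₀ ℕ) = v
      · rw [hFC, coeff_C, if_pos hv]
        have : aeval f F = coeff 0 F := by rw [hFC, aeval_C]; simp
        rw [← this]
        exact (pow_one I) ▸ hmem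
      · rw [hFC, coeff_C, if_neg hv]
        exact zero_mem _
    | succ d ihd =>
      intro F hF hmem v
      obtain ⟨G, H, hG, hH, hFGH⟩ := decompose F hF
      have hrenG : aeval f (rename Fin.castSucc G) = aeval f' G := by
        rw [aeval_rename]; rfl
      have heq0 : aeval f F = aeval f' G + g * aeval f H := by
        rw [hFGH, map_add, _root_.map_mul, aeval_X, hrenG, hg]
      have hmem' : aeval f F ∈ I' ^ (d + 2) ⊔ span {g} * I ^ (d + 1) := by
        have hle := pow_sup_le I' (span {g}) (d + 1)
        rw [← hIsup] at hle
        exact hle hmem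
      obtain ⟨u, hu, z, hz, huz⟩ := Submodule.mem_sup.mp hmem'
      obtain ⟨vv, hvv, hgvv⟩ := Ideal.mem_span_singleton_mul.mp hz
      have heq : aeval f' G + g * aeval f H = u + g * vv := by
        rw [← heq0, ← huz, hgvv]
      have h5 : g * (vv - aeval f H) ∈ I' ^ (d + 2 - 1) := by
        have hid : g * (vv - aeval f H) = aeval f' G - u := by linear_combination -heq
        rw [hid]
        exact sub_mem (aeval_mem_pow f' hG) (Ideal.pow_le_pow_right (Nat.le_succ _) hu)
      have h6 : vv - aeval f H ∈ I' ^ (d + 1) := lemB (d + 1) _ h5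
      have h7 : aeval f H ∈ I ^ (d + 1) := by
        have hid : aeval f H = vv - (vv - aeval f H) := by ring
        rw [hid]
        exact sub_mem hvv (Ideal.pow_right_mono hI'leI _ h6)
      have hHc : ∀ w, coeff w H ∈ I := ihd H hH h7
      obtain ⟨W, hWh, hWe⟩ := exists_rep f' h6
      have h8 : aeval f' (G - C g * W) ∈ I' ^ (d + 2) := by
        rw [map_sub, _root_.map_mul, aeval_C, hWe]
        have hid : aeval f' G - (algebraMap R R) g * (vv - aeval f H) = u := by
          simp only [Algebra.algebraMap_self, RingHom.id_apply]
          linear_combination heq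
        rw [hid]
        exact hu
      have hGW : (G - C g * W).IsHomogeneous (d + 1) := by
        refine hG.sub ?_
        simpa using (isHomogeneous_C (Fin n) g).mul hWh
      have hGc : ∀ w, coeff w (G - C g * W) ∈ I' := QR' (d + 1) _ hGW h8
      have hGcoeff : ∀ w, coeff w G ∈ I := by
        intro w
        have h9 : coeff w G = coeff w (G - C g * W) + g * coeff w W := by
          simp only [coeff_sub, coeff_C_mul]; ring
        rw [h9]
        exact add_mem (hI'leI (hGc w)) (I.mul_mem_right _ hgI)
      rw [hFGH, coeff_add]
      refine add_mem ?_ ?_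
      · by_cases h0 : coeff v (rename Fin.castSucc G) = 0
        · rw [h0]; exact zero_mem _
        · obtain ⟨u', hu', _⟩ := coeff_rename_ne_zero _ _ _ h0
          rw [← hu', coeff_rename_mapDomain _ (Fin.castSucc_injective n)]
          exact hGcoeff u'
      · rw [mul_comm, coeff_mul_X']
        split
        · exact hHc _
        · exact zero_mem _

end MLIaux

lemma MLIaux.efof_apply {n : ℕ} (h : Fin n → ℕ) (i : Fin n) :
    (Finsupp.equivFunOnFinite.symm h) i = h i := by
  simp [Finsupp.equivFunOnFinite]; rfl

/-- Over a polynomial ring `R = k[X₁,…,X_m]` in characteristic `p > 0`,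
if `f₁,…,fₙ` is a regular sequence with `R/(f₁,…,fₙ)` a domain, then the monomials
`f₁^{α₁}⋯fₙ^{αₙ}` with `0 ≤ αᵢ < p` are linearly independent over the subring of
`p`-th powers. -/
theorem monomials_linearly_independent_over_pth_powers
    (p : ℕ) (hp : p.Prime) (k : Type*) [Field k] [CharP k p]
    (m n : ℕ) (f : Fin n → MvPolynomial (Fin m) k)
    (hreg : RingTheory.Sequence.IsRegular (MvPolynomial (Fin m) k) (List.ofFn f))
    (hdom : IsDomain (MvPolynomial (Fin m) k ⧸ Ideal.span (Set.range f)))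
    (x : (Fin n → Fin p) → MvPolynomial (Fin m) k)
    (hsum : ∑ α : Fin n → Fin p, (∏ i : Fin n, f i ^ (α i : ℕ)) * (x α) ^ p = 0) :
    ∀ α : Fin n → Fin p, x α = 0 := by
  classical
  haveI := Fact.mk hp
  by_contra hcon
  push_neg at hcon
  obtain ⟨αbad, hbad⟩ := hcon
  set I : Ideal (MvPolynomial (Fin m) k) := Ideal.span (Set.range f) with hIdef
  have hprime : I.IsPrime := (Ideal.Quotient.isDomain_iff_prime I).mp hdom
  have hne : I ≠ ⊤ := hprime.ne_top
  have hKrull : (⨅ i : ℕ, I ^ i) = ⊥ := Ideal.iInf_pow_eq_bot_of_isDomain I hne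
  have hord : ∀ y : MvPolynomial (Fin m) k, y ≠ 0 → ∃ d, y ∈ I ^ d ∧ y ∉ I ^ (d + 1) := by
    intro y hy
    have hex : ∃ d, y ∉ I ^ d := by
      by_contra hall
      push_neg at hall
      have : y ∈ (⨅ i : ℕ, I ^ i) := Ideal.mem_iInf.mpr hall
      rw [hKrull, Submodule.mem_bot] at this
      exact hy this
    have hN0 : Nat.find hex ≠ 0 := by
      intro h0
      have := Nat.find_spec hex
      rw [h0, pow_zero, Ideal.one_eq_top] at this
      exact this Submodule.mem_top
    refine ⟨Nat.find hex - 1, ?_, ?_⟩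
    · have := Nat.find_min hex (show Nat.find hex - 1 < Nat.find hex by omega)
      exact not_not.mp this
    · have := Nat.find_spec hex
      rwa [show Nat.find hex - 1 + 1 = Nat.find hex by omega]
  have Hν : ∀ α : Fin n → Fin p, ∃ d : ℕ,
      x α ≠ 0 → (x α ∈ I ^ d ∧ x α ∉ I ^ (d + 1)) := by
    intro α
    by_cases h : x α = 0
    · exact ⟨0, fun h' => absurd h h'⟩
    · obtain ⟨d, h1, h2⟩ := hord _ h
      exact ⟨d, fun _ => ⟨h1, h2⟩⟩
  choose ν hν using Hν
  set wt : (Fin n → Fin p) → ℕ := fun α => (∑ i, (α i : ℕ)) + p * ν α with hwt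
  set A : Finset (Fin n → Fin p) := Finset.univ.filter (fun α => x α ≠ 0) with hA
  have hAne : A.Nonempty := ⟨αbad, by simp [hA, hbad]⟩
  obtain ⟨α₀, hα₀A, hmin⟩ := A.exists_min_image wt hAne
  set D := wt α₀ with hD
  set T : Finset (Fin n → Fin p) :=
    Finset.univ.filter (fun α => x α ≠ 0 ∧ wt α = D) with hT
  have hx0 : x α₀ ≠ 0 := (Finset.mem_filter.mp hα₀A).2
  have hα₀T : α₀ ∈ T := Finset.mem_filter.mpr ⟨Finset.mem_univ _, hx0, rfl⟩
  have HW : ∀ α : Fin n → Fin p, ∃ W : MvPolynomial (Fin n) (MvPolynomial (Fin m) k),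
      x α ≠ 0 → (W.IsHomogeneous (ν α) ∧ MvPolynomial.aeval f W = x α) := by
    intro α
    by_cases h : x α = 0
    · exact ⟨0, fun h' => absurd h h'⟩
    · obtain ⟨W, h1, h2⟩ := MLIaux.exists_rep f ((hν α h).1)
      exact ⟨W, fun _ => ⟨h1, h2⟩⟩
  choose W hW using HW
  set enc : (Fin n → Fin p) → (Fin n →₀ ℕ) :=
    fun α => Finsupp.equivFunOnFinite.symm (fun i => (α i : ℕ)) with henc
  have henc_apply : ∀ α i, enc α i = (α i : ℕ) := fun α i => MLIaux.efof_apply _ i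
  set F : MvPolynomial (Fin n) (MvPolynomial (Fin m) k) :=
    ∑ α ∈ T, MvPolynomial.monomial (enc α) 1 * (W α) ^ p with hF
  have hterm : ∀ α ∈ T, MvPolynomial.aeval f (MvPolynomial.monomial (enc α) 1 * (W α) ^ p)
      = (∏ i, f i ^ (α i : ℕ)) * (x α) ^ p := by
    intro α hα
    have hxα : x α ≠ 0 := ((Finset.mem_filter.mp hα).2).1
    rw [_root_.map_mul, map_pow, (hW α hxα).2, MvPolynomial.aeval_monomial]
    congr 1
    rw [map_one, one_mul, Finsupp.prod_fintype _ _ (fun i => pow_zero _)]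
    exact Finset.prod_congr rfl fun i _ => by rw [henc_apply]
  have hFhom : F.IsHomogeneous D := by
    refine MvPolynomial.IsHomogeneous.sum _ _ _ fun α hα => ?_
    have hmemT := (Finset.mem_filter.mp hα).2
    have h1 : (MvPolynomial.monomial (enc α)
        (1 : MvPolynomial (Fin m) k)).IsHomogeneous (∑ i, (α i : ℕ)) :=
      MvPolynomial.isHomogeneous_monomial _ (by
        rw [MLIaux.degree_eq_sum]
        exact Finset.sum_congr rfl fun i _ => henc_apply α i)
    have h2 : ((W α) ^ p).IsHomogeneous (ν α * p) := (hW α hmemT.1).1.pow p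
    have h3 := h1.mul h2
    have h4 : (∑ i, (α i : ℕ)) + ν α * p = D := by
      rw [← hmemT.2, hwt]; ring
    rwa [h4] at h3
  have hFmem : MvPolynomial.aeval f F ∈ I ^ (D + 1) := by
    have hsplit := Finset.sum_filter_add_sum_filter_not Finset.univ
      (fun α => x α ≠ 0 ∧ wt α = D) (fun α => (∏ i, f i ^ (α i : ℕ)) * (x α) ^ p)
    rw [hsum] at hsplit
    have hFeq : MvPolynomial.aeval f F
        = ∑ α ∈ T, (∏ i, f i ^ (α i : ℕ)) * (x α) ^ p := by
      rw [hF, map_sum]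
      exact Finset.sum_congr rfl hterm
    rw [hFeq, eq_neg_of_add_eq_zero_left hsplit]
    refine neg_mem (Submodule.sum_mem _ fun α hα => ?_)
    rw [Finset.mem_filter] at hα
    by_cases hz : x α = 0
    · rw [hz, zero_pow hp.ne_zero, mul_zero]
      exact zero_mem _
    · have hwtα : wt α ≠ D := fun hD' => hα.2 ⟨hz, hD'⟩
      have hge : D ≤ wt α := hmin α (by simp [hA, hz])
      have hgt : D + 1 ≤ wt α := by omega
      have hm1 : (∏ i, f i ^ (α i : ℕ)) ∈ I ^ (∑ i, (α i : ℕ)) := MLIaux.prod_pow_mem f _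
      have hm2 : (x α) ^ p ∈ I ^ (p * ν α) := by
        have := Ideal.pow_mem_pow ((hν α hz).1) p
        rwa [← pow_mul, mul_comm (ν α) p] at this
      have hmul := Ideal.mul_mem_mul hm1 hm2
      rw [← pow_add] at hmul
      exact Ideal.pow_le_pow_right hgt hmul
  have hcoeffF : ∀ γ, MvPolynomial.coeff γ F ∈ I :=
    MLIaux.quasi_regular f hreg.toIsWeaklyRegular D F hFhom hFmem
  have hfrob : ∀ α : Fin n → Fin p, (W α) ^ p = ∑ v ∈ (W α).support,
      MvPolynomial.monomial (p • v) ((MvPolynomial.coeff v (W α)) ^ p) := by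
    intro α
    conv_lhs => rw [(W α).as_sum]
    rw [sum_pow_char]
    exact Finset.sum_congr rfl fun v _ => by rw [MvPolynomial.monomial_pow]
  have hWcoeff : ∀ v₀ : Fin n →₀ ℕ, MvPolynomial.coeff v₀ (W α₀) ∈ I := by
    intro v₀
    have hinj : ∀ (α : Fin n → Fin p) (v : Fin n →₀ ℕ),
        enc α + p • v = enc α₀ + p • v₀ → α = α₀ ∧ v = v₀ := by
      intro α v hsum'
      have hcoord : ∀ i, (α i : ℕ) + p * v i = (α₀ i : ℕ) + p * v₀ i := by
        intro i
        have h := DFunLike.congr_fun hsum' i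
        simpa [henc_apply, Finsupp.add_apply, Finsupp.smul_apply, smul_eq_mul] using h
      have hα : α = α₀ := by
        funext i
        have h1 := hcoord i
        have m1 : ((α i : ℕ) + p * v i) % p = (α i : ℕ) % p := Nat.add_mul_mod_self_left _ _ _
        have m2 : ((α₀ i : ℕ) + p * v₀ i) % p = (α₀ i : ℕ) % p := Nat.add_mul_mod_self_left _ _ _
        have h2 : (α i : ℕ) % p = (α₀ i : ℕ) % p := by rw [← m1, ← m2, h1]
        rw [Nat.mod_eq_of_lt (α i).isLt, Nat.mod_eq_of_lt (α₀ i).isLt] at h2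
        exact Fin.ext h2
      refine ⟨hα, ?_⟩
      ext i
      have h1 := hcoord i
      rw [hα] at h1
      exact Nat.eq_of_mul_eq_mul_left hp.pos (by omega)
    have hcoeff_eq : MvPolynomial.coeff (enc α₀ + p • v₀) F
        = (MvPolynomial.coeff v₀ (W α₀)) ^ p := by
      rw [hF, MvPolynomial.coeff_sum]
      have hterm2 : ∀ α ∈ T, MvPolynomial.coeff (enc α₀ + p • v₀)
          (MvPolynomial.monomial (enc α) 1 * (W α) ^ p)
          = ∑ v ∈ (W α).support, (if enc α + p • v = enc α₀ + p • v₀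
              then (MvPolynomial.coeff v (W α)) ^ p else 0) := by
        intro α _
        rw [hfrob α, Finset.mul_sum, MvPolynomial.coeff_sum]
        refine Finset.sum_congr rfl fun v _ => ?_
        rw [MvPolynomial.monomial_mul, one_mul, MvPolynomial.coeff_monomial]
      rw [Finset.sum_congr rfl hterm2]
      rw [Finset.sum_eq_single_of_mem α₀ hα₀T]
      · by_cases hv₀ : v₀ ∈ (W α₀).support
        · rw [Finset.sum_eq_single_of_mem v₀ hv₀]
          · rw [if_pos rfl]
          · intro v _ hvne
            rw [if_neg (fun h => hvne (hinj α₀ v h).2)]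
        · rw [Finset.sum_eq_zero (fun v hv => if_neg (fun h => hv₀ ((hinj α₀ v h).2 ▸ hv))),
            MvPolynomial.notMem_support_iff.mp hv₀, zero_pow hp.ne_zero]
      · intro α _ hαne
        refine Finset.sum_eq_zero fun v _ => ?_
        rw [if_neg (fun h => hαne (hinj α v h).1)]
    have hmem := hcoeffF (enc α₀ + p • v₀)
    rw [hcoeff_eq] at hmem
    exact hprime.mem_of_pow_mem p hmem
  have hfinal : x α₀ ∈ I ^ (ν α₀ + 1) := by
    have hm := MLIaux.aeval_mem_of_coeff_mem f I (hW α₀ hx0).1 hWcoeff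
    rw [(hW α₀ hx0).2] at hm
    rwa [← pow_succ'] at hm
  exact (hν α₀ hx0).2 hfinal
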